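/- Second-welfare-type theorem: for every Pareto efficient allocation a (with respect to lexicographic preferences given true preference lists π), there exist nonnegative speed functions η_i on [0,1] with ∫_0^1 η_i(t) dt = r_i such that the extended SG mechanism with these speeds and truthful bids produces exactly the allocation a. -/

import Mathlib

open Finset

set_option maxHeartbeats 1000000

/-- Agent lexicographic-prefers share `a` to share `b` w.r.t. preference
permutation `π` (where `π ℓ` is the `ℓ`-th most preferred good): the leftmost
nonzero coordinate of the sorted difference is positive. -/
def LexPref {m : ℕ} (π : Equiv.Perm (Fin m)) (a b : Fin m → ℝ) : Prop :=
  ∃ k : Fin m, (∀ l, l < k → a (π l) = b (π l)) ∧ b (π k) < a (π k)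

/-- A feasible allocation: nonnegative, row sums `r i`, column sums `q j`. -/
def IsAlloc {n m : ℕ} (q : Fin m → ℝ) (r : Fin n → ℝ)
    (a : Fin n → Fin m → ℝ) : Prop :=
  (∀ i j, 0 ≤ a i j) ∧ (∀ i, ∑ j, a i j = r i) ∧ (∀ j, ∑ i, a i j = q j)

/-- Time at which agent `i` starts consuming good `j` under bids `σ`, given the
exhaustion times `T`: the latest exhaustion time among goods `i` bids before `j`. -/
def startTime {n m : ℕ} (σ : Fin n → Equiv.Perm (Fin m)) (T : Fin m → ℝ)
    (i : Fin n) (j : Fin m) : ℝ :=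
  (Finset.univ.filter (fun j' => (σ i).symm j' < (σ i).symm j)).fold max 0 T

/-- The extended SG allocation with speed functions `η` and exhaustion times
`T` under bids `σ`: each agent consumes her most-preferred unexhausted good at
time-varying rate `η i t` from time 0 to time 1; good `j` is exhausted at time
`T j`. -/
def IsExtSGAllocT {n m : ℕ} (q : Fin m → ℝ) (η : Fin n → ℝ → ℝ)
    (σ : Fin n → Equiv.Perm (Fin m)) (T : Fin m → ℝ)
    (a : Fin n → Fin m → ℝ) : Prop :=
  (∀ j, 0 ≤ T j ∧ T j ≤ 1) ∧
  (∀ i j, a i j = ∫ t in (min (startTime σ T i j) (T j))..(T j), η i t) ∧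
  (∀ j, ∑ i, a i j = q j)

/-- `a` is produced by the extended SG mechanism with speeds `η` under bids `σ`. -/
def IsExtSGAlloc {n m : ℕ} (q : Fin m → ℝ) (η : Fin n → ℝ → ℝ)
    (σ : Fin n → Equiv.Perm (Fin m)) (a : Fin n → Fin m → ℝ) : Prop :=
  ∃ T, IsExtSGAllocT q η σ T a


lemma exists_path {α : Type*} {R : α → α → Prop} {x y : α} (h : Relation.TransGen R x y) :
    ∃ p, 1 ≤ p ∧ ∃ c : ℕ → α, c 0 = x ∧ c p = y ∧ ∀ k < p, R (c k) (c (k + 1)) := by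
  induction h with
  | @single b hxy =>
    exact ⟨1, le_refl 1, fun k => if k = 0 then x else b, by simp, by simp,
      fun k hk => by interval_cases k <;> simpa⟩
  | @tail b z hxb hbz ih =>
    obtain ⟨p, hp, c, hc0, hcp, hch⟩ := ih
    refine ⟨p + 1, by omega, fun k => if k ≤ p then c k else z, by simp [hc0], by simp, ?_⟩
    intro k hk
    rcases lt_or_eq_of_le (Nat.lt_succ_iff.mp hk) with h' | h'
    · simpa [Nat.le_of_lt h', Nat.succ_le_of_lt h'] using hch k h'
    · subst h'; simpa [hcp] using hbz

lemma exists_simple_cycle {α : Type*} {R : α → α → Prop} {j : α}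
    (h : Relation.TransGen R j j) :
    ∃ p, ∃ c : ℕ → α, 1 ≤ p ∧ c p = c 0 ∧ (∀ k < p, R (c k) (c (k + 1))) ∧
      ∀ k l, k < l → l < p → c k ≠ c l := by
  classical
  have hQ : ∃ p, 1 ≤ p ∧ ∃ c : ℕ → α, c p = c 0 ∧ ∀ k < p, R (c k) (c (k + 1)) := by
    obtain ⟨p, hp, c, hc0, hcp, hch⟩ := exists_path h
    exact ⟨p, hp, c, by rw [hc0, hcp], hch⟩
  obtain ⟨hp1, c, hc0, hch⟩ := Nat.find_spec hQ
  refine ⟨Nat.find hQ, c, hp1, hc0, hch, ?_⟩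
  intro k l hkl hlp heq
  have hshort : 1 ≤ l - k ∧ ∃ c' : ℕ → α, c' (l - k) = c' 0 ∧
      ∀ t < l - k, R (c' t) (c' (t + 1)) := by
    refine ⟨by omega, fun t => c (k + t), ?_, ?_⟩
    · simp only [Nat.add_sub_cancel' (le_of_lt hkl), Nat.add_zero]
      rw [← heq]
    · intro t ht
      have h1 : k + t < Nat.find hQ := by omega
      have h2 := hch (k + t) h1
      simpa [← Nat.add_assoc] using h2
  exact Nat.find_min hQ (by omega) hshort

noncomputable def stepFun (m : ℕ) (c : ℕ → ℝ) : ℝ → ℝ :=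
  fun t => ∑ k ∈ Finset.range m, Set.indicator (Set.Ico ((k : ℝ) / m) ((k + 1 : ℕ) / m))
    (fun _ => c k) t

lemma stepFun_nonneg {m : ℕ} {c : ℕ → ℝ} (hc : ∀ k, 0 ≤ c k) (t : ℝ) :
    0 ≤ stepFun m c t :=
  Finset.sum_nonneg fun k _ => Set.indicator_nonneg (fun _ _ => hc k) t

lemma stepFun_integrable (m : ℕ) (c : ℕ → ℝ) :
    MeasureTheory.Integrable (stepFun m c) MeasureTheory.volume := by
  apply MeasureTheory.integrable_finset_sum
  intro k _
  rw [MeasureTheory.integrable_indicator_iff measurableSet_Ico]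
  exact (MeasureTheory.integrableOn_const_iff).mpr (Or.inr measure_Ico_lt_top)

lemma stepFun_intervalIntegrable (m : ℕ) (c : ℕ → ℝ) (x y : ℝ) :
    IntervalIntegrable (stepFun m c) MeasureTheory.volume x y :=
  (stepFun_integrable m c).intervalIntegrable

lemma stepFun_eq {m : ℕ} (c : ℕ → ℝ) {k : ℕ} (hk : k < m) {t : ℝ}
    (ht : t ∈ Set.Ico ((k : ℝ) / m) ((k + 1 : ℕ) / m)) : stepFun m c t = c k := by
  rw [stepFun, Finset.sum_eq_single k]
  · exact Set.indicator_of_mem ht _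
  · intro k' _ hk'
    apply Set.indicator_of_notMem
    intro ht'
    rcases lt_or_gt_of_ne hk' with h | h
    · have h1 : ((k' + 1 : ℕ) : ℝ) / m ≤ (k : ℝ) / m := by
        gcongr
        exact_mod_cast h
      have := ht.1; have := ht'.2; linarith
    · have h1 : ((k + 1 : ℕ) : ℝ) / m ≤ (k' : ℝ) / m := by
        gcongr
        exact_mod_cast h
      have := ht.2; have := ht'.1; linarith
  · exact fun h => absurd (Finset.mem_range.mpr hk) h

lemma stepFun_integral_one {m : ℕ} (hm : 0 < m) (c : ℕ → ℝ) {k : ℕ} (hk : k < m) :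
    ∫ t in ((k : ℝ) / m)..((k + 1 : ℕ) / m), stepFun m c t = c k / m := by
  have hm' : (0 : ℝ) < m := by exact_mod_cast hm
  have hle : ((k : ℝ) / m) ≤ ((k + 1 : ℕ) : ℝ) / m := by
    gcongr
    push_cast; linarith
  have hae : ∀ᵐ t ∂MeasureTheory.volume,
      t ∈ Set.uIoc ((k : ℝ) / m) ((k + 1 : ℕ) / m) → stepFun m c t = c k := by
    rw [MeasureTheory.ae_iff]
    refine MeasureTheory.measure_mono_null ?_ (MeasureTheory.measure_singleton (((k + 1 : ℕ) : ℝ) / m))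
    · intro t ht
      simp only [Set.mem_setOf_eq, _root_.not_imp] at ht
      obtain ⟨ht1, ht2⟩ := ht
      rw [Set.uIoc_of_le hle] at ht1
      have : t ∉ Set.Ico ((k : ℝ) / m) ((k + 1 : ℕ) / m) := fun hmem => ht2 (stepFun_eq c hk hmem)
      simp only [Set.mem_Ico, not_and, not_lt] at this
      have := this (le_of_lt ht1.1)
      exact le_antisymm ht1.2 this
  rw [intervalIntegral.integral_congr_ae hae, intervalIntegral.integral_const]
  rw [smul_eq_mul]
  push_cast
  field_simp
  ring

lemma stepFun_integral {m : ℕ} (hm : 0 < m) (c : ℕ → ℝ) {u v : ℕ} (huv : u ≤ v) (hv : v ≤ m) :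
    ∫ t in ((u : ℝ) / m)..((v : ℝ) / m), stepFun m c t = ∑ k ∈ Finset.Ico u v, c k / m := by
  induction v, huv using Nat.le_induction with
  | base => simp
  | succ v hv' ih =>
    have hvm : v < m := hv
    have h1 := ih (le_of_lt hvm)
    have h2 := stepFun_integral_one hm c hvm
    rw [← intervalIntegral.integral_add_adjacent_intervals (stepFun_intervalIntegrable m c _ _)
        (stepFun_intervalIntegrable m c _ _) (b := (v : ℝ) / m)]
    rw [h1, h2, Finset.sum_Ico_succ_top hv']

lemma acyclic_R {n m : ℕ} (q : Fin m → ℝ) (r : Fin n → ℝ) (π : Fin n → Equiv.Perm (Fin m))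
    (a : Fin n → Fin m → ℝ) (hA : IsAlloc q r a)
    (hPareto : ¬ ∃ b, IsAlloc q r b ∧
        (∀ i, b i = a i ∨ LexPref (π i) (b i) (a i)) ∧
        (∃ i, LexPref (π i) (b i) (a i)))
    (j : Fin m) :
    ¬ Relation.TransGen (fun j' j => ∃ i, 0 < a i j ∧ (π i).symm j' < (π i).symm j) j j := by
  intro hT
  classical
  obtain ⟨p, c, hp, hcp, hch, hinj⟩ := exists_simple_cycle hT
  have hw0 : ∀ k, ∃ i, k < p → 0 < a i (c (k + 1)) ∧ (π i).symm (c k) < (π i).symm (c (k + 1)) := by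
    intro k
    by_cases hk : k < p
    · obtain ⟨i, hi⟩ := hch k hk; exact ⟨i, fun _ => hi⟩
    · exact ⟨(hch 0 hp).choose, fun h => absurd h hk⟩
  choose w hw using hw0
  have hne : (Finset.range p).Nonempty := ⟨0, Finset.mem_range.mpr hp⟩
  set ε := (Finset.range p).inf' hne (fun k => a (w k) (c (k + 1))) with hεdef
  have hε : 0 < ε := by
    rw [hεdef, Finset.lt_inf'_iff]
    intro k hk
    exact (hw k (Finset.mem_range.mp hk)).1
  have hεle : ∀ k, k < p → ε ≤ a (w k) (c (k + 1)) :=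
    fun k hk => Finset.inf'_le _ (Finset.mem_range.mpr hk)
  set G : Fin n → Fin m → Prop := fun i j => ∃ k, k < p ∧ w k = i ∧ c k = j with hGdef
  set L : Fin n → Fin m → Prop := fun i j => ∃ k, k < p ∧ w k = i ∧ c (k + 1) = j with hLdef
  set b : Fin n → Fin m → ℝ :=
    fun i j => a i j + (if G i j then ε else 0) - (if L i j then ε else 0) with hbdef
  have hcinj : ∀ k l, k < p → l < p → c k = c l → k = l := by
    intro k l hk hl he
    rcases lt_trichotomy k l with h | h | h
    · exact absurd he (hinj k l h hl)
    · exact h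
    · exact absurd he.symm (hinj l k h hk)
  have hc1inj : ∀ k l, k < p → l < p → c (k + 1) = c (l + 1) → k = l := by
    intro k l hk hl he
    rcases Nat.lt_or_ge (k + 1) p with hk1 | hk1 <;> rcases Nat.lt_or_ge (l + 1) p with hl1 | hl1
    · exact Nat.succ_injective (hcinj _ _ hk1 hl1 he)
    · have hlp : l + 1 = p := by omega
      rw [hlp, hcp] at he
      exact absurd he.symm (hinj 0 (k + 1) (by omega) hk1)
    · have hkp : k + 1 = p := by omega
      rw [hkp, hcp] at he
      exact absurd he (hinj 0 (l + 1) (by omega) hl1)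
    · omega
  have himg : ∀ jj, (∃ k, k < p ∧ c k = jj) ↔ (∃ k, k < p ∧ c (k + 1) = jj) := by
    intro jj
    constructor
    · rintro ⟨k, hk, he⟩
      match k with
      | 0 => exact ⟨p - 1, by omega, by rw [show p - 1 + 1 = p by omega, hcp]; exact he⟩
      | Nat.succ k' => exact ⟨k', by omega, he⟩
    · rintro ⟨k, hk, he⟩
      rcases Nat.lt_or_ge (k + 1) p with h | h
      · exact ⟨k + 1, h, he⟩
      · exact ⟨0, by omega, by rw [← hcp, show p = k + 1 by omega]; exact he⟩
  -- row sums
  have hrow : ∀ i, ∑ jj, b i jj = ∑ jj, a i jj := by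
    intro i
    have h1 : Finset.univ.filter (fun jj => G i jj)
        = ((Finset.range p).filter (fun k => w k = i)).image (fun k => c k) := by
      ext jj
      simp only [hGdef, Finset.mem_filter, Finset.mem_univ, true_and, Finset.mem_image,
        Finset.mem_range]
      constructor
      · rintro ⟨k, hk, hwk, hck⟩; exact ⟨k, ⟨hk, hwk⟩, hck⟩
      · rintro ⟨k, ⟨hk, hwk⟩, hck⟩; exact ⟨k, hk, hwk, hck⟩
    have h2 : Finset.univ.filter (fun jj => L i jj)
        = ((Finset.range p).filter (fun k => w k = i)).image (fun k => c (k + 1)) := by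
      ext jj
      simp only [hLdef, Finset.mem_filter, Finset.mem_univ, true_and, Finset.mem_image,
        Finset.mem_range]
      constructor
      · rintro ⟨k, hk, hwk, hck⟩; exact ⟨k, ⟨hk, hwk⟩, hck⟩
      · rintro ⟨k, ⟨hk, hwk⟩, hck⟩; exact ⟨k, hk, hwk, hck⟩
    have hGsum : (∑ jj, if G i jj then ε else 0) = ∑ jj, if L i jj then ε else 0 := by
      rw [← Finset.sum_filter, ← Finset.sum_filter, h1, h2, Finset.sum_const, Finset.sum_const,
        Finset.card_image_of_injOn, Finset.card_image_of_injOn]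
      · intro k hk l hl he
        simp only [Finset.mem_coe, Finset.mem_filter, Finset.mem_range] at hk hl
        exact hc1inj k l hk.1 hl.1 he
      · intro k hk l hl he
        simp only [Finset.mem_coe, Finset.mem_filter, Finset.mem_range] at hk hl
        exact hcinj k l hk.1 hl.1 he
    simp only [hbdef]
    rw [Finset.sum_sub_distrib, Finset.sum_add_distrib, hGsum]
    ring
  -- column sums
  have hcol : ∀ jj, ∑ i, b i jj = ∑ i, a i jj := by
    intro jj
    have e1 : (∑ i, if G i jj then ε else 0) = if ∃ k, k < p ∧ c k = jj then ε else 0 := by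
      by_cases h : ∃ k, k < p ∧ c k = jj
      · obtain ⟨k, hk, hck⟩ := h
        rw [if_pos ⟨k, hk, hck⟩, ← Finset.sum_filter]
        have : Finset.univ.filter (fun i => G i jj) = {w k} := by
          ext i
          simp only [hGdef, Finset.mem_filter, Finset.mem_univ, true_and, Finset.mem_singleton]
          constructor
          · rintro ⟨k', hk', hwk', hck'⟩
            rw [← hwk', hcinj k' k hk' hk (hck'.trans hck.symm)]
          · rintro rfl; exact ⟨k, hk, rfl, hck⟩
        rw [this, Finset.sum_singleton]
      · rw [if_neg h]
        apply Finset.sum_eq_zero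
        intro i _
        rw [if_neg]
        rintro ⟨k, hk, _, hck⟩
        exact h ⟨k, hk, hck⟩
    have e2 : (∑ i, if L i jj then ε else 0) = if ∃ k, k < p ∧ c (k + 1) = jj then ε else 0 := by
      by_cases h : ∃ k, k < p ∧ c (k + 1) = jj
      · obtain ⟨k, hk, hck⟩ := h
        rw [if_pos ⟨k, hk, hck⟩, ← Finset.sum_filter]
        have : Finset.univ.filter (fun i => L i jj) = {w k} := by
          ext i
          simp only [hLdef, Finset.mem_filter, Finset.mem_univ, true_and, Finset.mem_singleton]
          constructor
          · rintro ⟨k', hk', hwk', hck'⟩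
            rw [← hwk', hc1inj k' k hk' hk (hck'.trans hck.symm)]
          · rintro rfl; exact ⟨k, hk, rfl, hck⟩
        rw [this, Finset.sum_singleton]
      · rw [if_neg h]
        apply Finset.sum_eq_zero
        intro i _
        rw [if_neg]
        rintro ⟨k, hk, _, hck⟩
        exact h ⟨k, hk, hck⟩
    simp only [hbdef]
    rw [Finset.sum_sub_distrib, Finset.sum_add_distrib, e1, e2, if_congr (himg jj) rfl rfl]
    ring
  -- nonnegativity
  have hbnn : ∀ i jj, 0 ≤ b i jj := by
    intro i jj
    by_cases hL : L i jj
    · obtain ⟨k, hk, hwk, hck⟩ := hL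
      have haj : ε ≤ a i jj := by
        rw [← hwk, ← hck]; exact hεle k hk
      simp only [hbdef]
      split_ifs <;> linarith [hε]
    · simp only [hbdef, if_neg hL]
      split_ifs <;> linarith [hA.1 i jj, hε.le]
  -- gain-with-no-loss claim
  have hclaim : ∀ (i : Fin n) (K : ℕ),
      (∃ k, k < p ∧ w k = i ∧ ((π i).symm (c k) : ℕ) < K) →
      ∃ jj, ((π i).symm jj : ℕ) < K ∧ a i jj < b i jj := by
    intro i K hS
    set S := (Finset.range p).filter (fun k => w k = i ∧ ((π i).symm (c k) : ℕ) < K) with hSdef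
    have hSne : S.Nonempty := by
      obtain ⟨k, h1, h2, h3⟩ := hS
      exact ⟨k, by simp only [hSdef, Finset.mem_filter, Finset.mem_range]; exact ⟨h1, h2, h3⟩⟩
    obtain ⟨k1, hk1S, hk1min⟩ := Finset.exists_min_image S (fun k => ((π i).symm (c k) : ℕ)) hSne
    simp only [hSdef, Finset.mem_filter, Finset.mem_range] at hk1S
    obtain ⟨hk1p, hwk1, hrk1⟩ := hk1S
    refine ⟨c k1, hrk1, ?_⟩
    have hG : G i (c k1) := ⟨k1, hk1p, hwk1, rfl⟩
    have hnL : ¬ L i (c k1) := by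
      rintro ⟨k2, hk2p, hwk2, hck2⟩
      have hpref := (hw k2 hk2p).2
      rw [hwk2, hck2] at hpref
      rw [Fin.lt_iff_val_lt_val] at hpref
      have hk2S : k2 ∈ S := by
        simp only [hSdef, Finset.mem_filter, Finset.mem_range]
        exact ⟨hk2p, hwk2, lt_trans hpref hrk1⟩
      have := hk1min k2 hk2S
      omega
    simp only [hbdef, if_pos hG, if_neg hnL]
    linarith [hε]
  have hAb : IsAlloc q r b :=
    ⟨hbnn, fun i => by rw [hrow i]; exact hA.2.1 i, fun jj => by rw [hcol jj]; exact hA.2.2 jj⟩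
  have hLex : ∀ i, b i = a i ∨ LexPref (π i) (b i) (a i) := by
    intro i
    by_cases hchg : ∀ jj, b i jj = a i jj
    · exact Or.inl (funext hchg)
    right
    push_neg at hchg
    set C := Finset.univ.filter (fun jj => b i jj ≠ a i jj) with hCdef
    have hCne : C.Nonempty := by
      obtain ⟨j0, hj0⟩ := hchg
      exact ⟨j0, by simp only [hCdef, Finset.mem_filter, Finset.mem_univ, true_and]; exact hj0⟩
    obtain ⟨js, hjC, hjmin⟩ := Finset.exists_min_image C (fun jj => ((π i).symm jj : ℕ)) hCne
    refine ⟨(π i).symm js, ?_, ?_⟩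
    · intro l hl
      by_contra hne
      have hlC : π i l ∈ C := by
        simp only [hCdef, Finset.mem_filter, Finset.mem_univ, true_and]
        exact hne
      have hle := hjmin _ hlC
      simp only [Equiv.symm_apply_apply] at hle
      rw [Fin.lt_iff_val_lt_val] at hl
      omega
    · rw [Equiv.apply_symm_apply]
      have hne : b i js ≠ a i js := by
        simpa only [hCdef, Finset.mem_filter, Finset.mem_univ, true_and] using hjC
      rcases lt_or_gt_of_ne hne with hlt | hgt
      · exfalso
        have hL : L i js := by
          by_contra hnL
          simp only [hbdef, if_neg hnL] at hlt
          split_ifs at hlt <;> linarith [hε]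
        obtain ⟨k0, hk0p, hwk0, hck0⟩ := hL
        have hpref := (hw k0 hk0p).2
        rw [hwk0, hck0, Fin.lt_iff_val_lt_val] at hpref
        obtain ⟨jj, hjr, hjlt⟩ := hclaim i ((π i).symm js : ℕ) ⟨k0, hk0p, hwk0, hpref⟩
        have hjjC : jj ∈ C := by
          simp only [hCdef, Finset.mem_filter, Finset.mem_univ, true_and]
          exact ne_of_gt hjlt
        have := hjmin _ hjjC
        omega
      · exact hgt
  have hEx : ∃ i, LexPref (π i) (b i) (a i) := by
    obtain ⟨jj, _, hjlt⟩ := hclaim (w 0) m ⟨0, hp, rfl, ((π (w 0)).symm (c 0)).isLt⟩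
    rcases hLex (w 0) with he | hl
    · exact absurd hjlt (by rw [he]; exact lt_irrefl _)
    · exact ⟨w 0, hl⟩
  exact hPareto ⟨b, hAb, hLex, hEx⟩

/-- Second-welfare-type theorem -/
theorem extSG_second_welfare {n m : ℕ} (q : Fin m → ℝ) (r : Fin n → ℝ)
    (π : Fin n → Equiv.Perm (Fin m))
    (hq : ∀ j, 0 < q j) (hr : ∀ i, 0 < r i) (hsum : ∑ i, r i = ∑ j, q j)
    (a : Fin n → Fin m → ℝ) (hA : IsAlloc q r a)
    (hPareto : ¬ ∃ b, IsAlloc q r b ∧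
        (∀ i, b i = a i ∨ LexPref (π i) (b i) (a i)) ∧
        (∃ i, LexPref (π i) (b i) (a i))) :
    ∃ η : Fin n → ℝ → ℝ,
      (∀ i t, 0 ≤ η i t) ∧
      (∀ i, IntervalIntegrable (η i) MeasureTheory.volume 0 1) ∧
      (∀ i, ∫ t in (0:ℝ)..1, η i t = r i) ∧
      IsExtSGAlloc q η π a := by
  classical
  rcases Nat.eq_zero_or_pos m with hm0 | hm
  · subst hm0
    have hnil : ∀ i : Fin n, False := by
      intro i
      have h1 : 0 < ∑ i, r i := Finset.sum_pos (fun i _ => hr i) ⟨i, Finset.mem_univ i⟩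
      rw [hsum] at h1
      simp at h1
    exact ⟨fun _ _ => 0, fun i => (hnil i).elim, fun i => (hnil i).elim,
      fun i => (hnil i).elim,
      ⟨Fin.elim0, fun j => j.elim0, fun i => (hnil i).elim, fun j => j.elim0⟩⟩
  have hm' : (0 : ℝ) < m := by exact_mod_cast hm
  set R : Fin m → Fin m → Prop :=
    fun j' j => ∃ i, 0 < a i j ∧ (π i).symm j' < (π i).symm j with hRdef
  have hacyc : ∀ j, ¬ Relation.TransGen R j j := acyclic_R q r π a hA hPareto
  set σg : Fin m → ℕ :=
    fun j => (Finset.univ.filter (fun j' => Relation.TransGen R j' j)).card with hσdef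
  have hσR : ∀ j' j, R j' j → σg j' < σg j := by
    intro j' j hR
    apply Finset.card_lt_card
    constructor
    · intro x hx
      simp only [Finset.mem_filter, Finset.mem_univ, true_and] at hx ⊢
      exact hx.tail hR
    · intro hsub
      exact hacyc j' (Finset.mem_filter.mp
        (hsub (Finset.mem_filter.mpr ⟨Finset.mem_univ _, Relation.TransGen.single hR⟩))).2
  have hσlt : ∀ j, σg j < m := by
    intro j
    have hsub : Finset.univ.filter (fun j' => Relation.TransGen R j' j)
        ⊆ Finset.univ.erase j := by
      intro x hx
      simp only [Finset.mem_filter, Finset.mem_univ, true_and] at hx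
      apply Finset.mem_erase.mpr
      refine ⟨?_, Finset.mem_univ _⟩
      rintro rfl
      exact hacyc x hx
    have h1 := Finset.card_le_card hsub
    rw [Finset.card_erase_of_mem (Finset.mem_univ j)] at h1
    simp only [Finset.card_univ, Fintype.card_fin] at h1
    simp only [hσdef]
    omega
  set sN : Fin n → Fin m → ℕ := fun i j =>
    (Finset.univ.filter (fun j' => (π i).symm j' < (π i).symm j)).fold max 0
      (fun j' => σg j' + 1) with hsNdef
  have hZ : ∀ i j, a i j ≠ 0 → sN i j ≤ σg j := by
    intro i j h
    refine (Finset.fold_max_le _).mpr ?_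
    refine ⟨Nat.zero_le _, ?_⟩
    intro j' hj'
    have hpref := (Finset.mem_filter.mp hj').2
    have hab : 0 < a i j := lt_of_le_of_ne (hA.1 i j) (Ne.symm h)
    have := hσR j' j ⟨i, hab, hpref⟩
    omega
  set setK : ℕ → Finset (Fin m) := fun k => Finset.univ.filter (fun j => k ≤ σg j) with hsetKdef
  have hg0 : ∀ (i : Fin n) (k : ℕ), ∃ j0 : Fin m, (setK k).Nonempty →
      j0 ∈ setK k ∧ ∀ j ∈ setK k, ((π i).symm j0 : ℕ) ≤ ((π i).symm j : ℕ) := by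
    intro i k
    by_cases h : (setK k).Nonempty
    · obtain ⟨j0, hj0, hmin⟩ := Finset.exists_min_image (setK k) (fun j => ((π i).symm j : ℕ)) h
      exact ⟨j0, fun _ => ⟨hj0, hmin⟩⟩
    · exact ⟨⟨0, hm⟩, fun h' => absurd h' h⟩
  choose g hg using hg0
  have hGin : ∀ i j k, sN i j ≤ k → k ≤ σg j → g i k = j := by
    intro i j k h1 h2
    have hjmem : j ∈ setK k := Finset.mem_filter.mpr ⟨Finset.mem_univ _, h2⟩
    obtain ⟨hgmem, hgmin⟩ := hg i k ⟨j, hjmem⟩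
    have hle := hgmin j hjmem
    rcases lt_or_eq_of_le hle with hlt | heq
    · exfalso
      have hpref : (π i).symm (g i k) < (π i).symm j := by
        rw [Fin.lt_iff_val_lt_val]; exact hlt
      have hin : g i k ∈ Finset.univ.filter (fun j' => (π i).symm j' < (π i).symm j) :=
        Finset.mem_filter.mpr ⟨Finset.mem_univ _, hpref⟩
      have h3 : σg (g i k) + 1 ≤ sN i j := (Finset.le_fold_max _).mpr (Or.inr ⟨_, hin, le_rfl⟩)
      have hk := (Finset.mem_filter.mp hgmem).2
      omega
    · exact (π i).symm.injective (Fin.ext heq)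
  have hGout : ∀ i k, (setK k).Nonempty → sN i (g i k) ≤ k ∧ k ≤ σg (g i k) := by
    intro i k hk
    obtain ⟨hgmem, hgmin⟩ := hg i k hk
    refine ⟨?_, (Finset.mem_filter.mp hgmem).2⟩
    refine (Finset.fold_max_le _).mpr ?_
    refine ⟨Nat.zero_le _, ?_⟩
    intro j' hj'
    have hpref := (Finset.mem_filter.mp hj').2
    by_contra hc
    push_neg at hc
    have hj'K : j' ∈ setK k := Finset.mem_filter.mpr ⟨Finset.mem_univ _, by omega⟩
    have := hgmin j' hj'K
    rw [Fin.lt_iff_val_lt_val] at hpref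
    omega
  set d : Fin n → Fin m → ℕ := fun i j => σg j + 1 - sN i j with hddef
  set cst : Fin n → ℕ → ℝ :=
    fun i k => if (setK k).Nonempty then a i (g i k) * m / (d i (g i k)) else 0 with hcstdef
  have hcstnn : ∀ i k, 0 ≤ cst i k := by
    intro i k
    simp only [hcstdef]
    split_ifs
    · apply div_nonneg (mul_nonneg (hA.1 _ _) (le_of_lt hm')) (Nat.cast_nonneg _)
    · exact le_refl 0
  have hblock : ∀ i j, sN i j ≤ σg j →
      ∑ k ∈ Finset.Ico (sN i j) (σg j + 1), cst i k / m = a i j := by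
    intro i j hsle
    have hd : (0:ℝ) < (d i j : ℝ) := by
      have h0 : 0 < d i j := by simp only [hddef]; omega
      exact_mod_cast h0
    have hconst : ∀ k ∈ Finset.Ico (sN i j) (σg j + 1), cst i k / m = a i j / (d i j) := by
      intro k hk
      rw [Finset.mem_Ico] at hk
      have h2 : k ≤ σg j := by omega
      have hne : (setK k).Nonempty := ⟨j, Finset.mem_filter.mpr ⟨Finset.mem_univ _, h2⟩⟩
      have hgk : g i k = j := hGin i j k hk.1 h2
      simp only [hcstdef, if_pos hne, hgk]
      field_simp
    rw [Finset.sum_congr rfl hconst, Finset.sum_const, Nat.card_Ico, nsmul_eq_mul]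
    rw [show σg j + 1 - sN i j = d i j by simp only [hddef]]
    field_simp
  have htot : ∀ i, ∑ k ∈ Finset.range m, cst i k / m = r i := by
    intro i
    rw [← hA.2.1 i]
    rw [← Finset.sum_filter_add_sum_filter_not (Finset.range m) (fun k => (setK k).Nonempty)
      (fun k => cst i k / m)]
    have hzero : ∑ k ∈ (Finset.range m).filter (fun k => ¬ (setK k).Nonempty),
        cst i k / m = 0 := by
      apply Finset.sum_eq_zero
      intro k hk
      have hne := (Finset.mem_filter.mp hk).2
      simp only [hcstdef, if_neg hne, zero_div]
    rw [hzero, add_zero]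
    rw [← Finset.sum_fiberwise_of_maps_to (g := fun k => g i k) (t := Finset.univ)
      (fun k _ => Finset.mem_univ _) (fun k => cst i k / m)]
    apply Finset.sum_congr rfl
    intro j _
    by_cases hsle : sN i j ≤ σg j
    · have hfib : ((Finset.range m).filter (fun k => (setK k).Nonempty)).filter
          (fun k => g i k = j) = Finset.Ico (sN i j) (σg j + 1) := by
        ext k
        simp only [Finset.mem_filter, Finset.mem_range, Finset.mem_Ico]
        constructor
        · rintro ⟨⟨hkm, hne⟩, hgk⟩
          have hout := hGout i k hne
          rw [hgk] at hout
          omega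
        · rintro ⟨h1, h2⟩
          have h2' : k ≤ σg j := by omega
          have hne : (setK k).Nonempty := ⟨j, Finset.mem_filter.mpr ⟨Finset.mem_univ _, h2'⟩⟩
          exact ⟨⟨by have := hσlt j; omega, hne⟩, hGin i j k h1 h2'⟩
      rw [hfib]
      exact hblock i j hsle
    · push_neg at hsle
      have haz : a i j = 0 := by
        by_contra h
        have := hZ i j h
        omega
      have hfib : ((Finset.range m).filter (fun k => (setK k).Nonempty)).filter
          (fun k => g i k = j) = ∅ := by
        ext k
        simp only [Finset.mem_filter, Finset.mem_range, Finset.notMem_empty, iff_false]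
        rintro ⟨⟨hkm, hne⟩, hgk⟩
        have hout := hGout i k hne
        rw [hgk] at hout
        omega
      rw [hfib, haz, Finset.sum_empty]
  set T : Fin m → ℝ := fun j => ((σg j + 1 : ℕ) : ℝ) / m with hTdef
  have hstart : ∀ i j, startTime π T i j = ((sN i j : ℕ) : ℝ) / m := by
    intro i j
    have hfold := Finset.fold_hom (op := max) (op' := max)
      (m := fun x : ℕ => (x : ℝ) / m) (b := 0)
      (f := fun j' => σg j' + 1)
      (s := Finset.univ.filter (fun j' => (π i).symm j' < (π i).symm j))
      (fun x y => by
        show ((max x y : ℕ) : ℝ) / (m : ℝ) = max ((x : ℝ) / m) ((y : ℝ) / m)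
        rw [Nat.cast_max, max_div_div_right (le_of_lt hm')])
    simp only [Nat.cast_zero, zero_div] at hfold
    rw [startTime]
    simp only [hTdef, hsNdef]
    exact hfold
  refine ⟨fun i => stepFun m (cst i), fun i t => stepFun_nonneg (hcstnn i) t,
    fun i => stepFun_intervalIntegrable m (cst i) 0 1, ?_, ?_⟩
  · intro i
    have hint := stepFun_integral hm (cst i) (Nat.zero_le m) le_rfl
    rw [Nat.cast_zero, zero_div, div_self hm'.ne'] at hint
    rw [← Finset.range_eq_Ico] at hint
    rw [hint]
    exact htot i
  · refine ⟨T, ?_, ?_, hA.2.2⟩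
    · intro j
      constructor
      · simp only [hTdef]
        positivity
      · simp only [hTdef]
        rw [div_le_one hm']
        exact_mod_cast hσlt j
    · intro i j
      by_cases hsle : sN i j ≤ σg j
      · have hlt : ((sN i j : ℕ) : ℝ) / m < T j := by
          simp only [hTdef]
          gcongr
          exact_mod_cast Nat.lt_succ_of_le hsle
        rw [hstart i j, min_eq_left hlt.le]
        simp only [hTdef]
        rw [stepFun_integral hm (cst i) (by omega) (hσlt j)]
        exact (hblock i j hsle).symm
      · push_neg at hsle
        have haz : a i j = 0 := by
          by_contra h
          have := hZ i j h
          omega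
        have hge : T j ≤ ((sN i j : ℕ) : ℝ) / m := by
          simp only [hTdef]
          gcongr
          exact_mod_cast hsle
        rw [hstart i j, min_eq_right hge, intervalIntegral.integral_same]
        exact haz
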